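/- arXiv:2012.06379 — 2 statements merged into one kernel-verified Lean document; each statement's English description precedes it below -/
import Mathlib

section
/- For natural numbers Y and S, Ξ(0,Y,S) = C(Y+2S, Y) · (2S−1)!!, where Ξ(0,Y,S) = Σ_{Δ ∈ Ω(0,Y,S)} ∏_{j=1}^{S} e(Δ,j), C denotes the binomial coefficient, and (2S−1)!! = 1·3·5···(2S−1) with the convention (−1)!! = 1. -/
/-- The heights attained immediately after each up-step of a trajectory
(listed in order of occurrence): `e(Δ,1), …, e(Δ,S)`. -/
def upsList (L : List ℕ) : List ℕ :=
  ((L.zip L.tail).filter (fun p => p.2 == p.1 + 1)).map Prod.snd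

/-- `L` is a ±1-step trajectory (of nonnegative integers) from `Y` to `X`. -/
def IsTraj (Y X : ℕ) (L : List ℕ) : Prop :=
  L.head? = some Y ∧ L.getLast? = some X ∧
    L.Chain' (fun a b => b = a + 1 ∨ a = b + 1)

/-- `Ω(X,Y,S)`: nonnegative ±1-step trajectories from `Y` to `X` with exactly `S` up-steps. -/
def Omega (X Y S : ℕ) : Set (List ℕ) :=
  {L | IsTraj Y X L ∧ (upsList L).length = S}


lemma ups_cc (a b : ℕ) (t : List ℕ) :
    upsList (a::b::t) = if b = a+1 then b :: upsList (b::t) else upsList (b::t) := by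
  simp [upsList]; split <;> simp_all

lemma omega_cases {L : List ℕ} {Y S : ℕ} (h : L ∈ Omega 0 Y S) :
    (Y = 0 ∧ S = 0 ∧ L = [0]) ∨
    (∃ t, L = Y :: t ∧
      ((∃ S', S = S' + 1 ∧ t ∈ Omega 0 (Y+1) S') ∨
       (∃ Y', Y = Y' + 1 ∧ t ∈ Omega 0 Y' S))) := by
  obtain ⟨⟨h1, h2, h3⟩, h4⟩ := h
  match L with
  | [] => simp at h1
  | [a] =>
    simp at h1 h2
    subst h1 h2
    left
    refine ⟨rfl, ?_, rfl⟩
    simpa [upsList] using h4.symm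
  | a :: b :: t =>
    simp at h1; subst h1
    right
    rw [List.getLast?_cons_cons] at h2
    rw [List.Chain', List.isChain_cons_cons] at h3
    refine ⟨b :: t, rfl, ?_⟩
    rcases h3.1 with hb | hb
    · subst hb
      left
      rw [ups_cc] at h4
      simp at h4
      obtain ⟨S', rfl⟩ : ∃ S', S = S' + 1 := by
        cases S with
        | zero => omega
        | succ n => exact ⟨n, rfl⟩
      exact ⟨S', rfl, ⟨⟨rfl, h2, h3.2⟩, by omega⟩⟩
    · right
      refine ⟨b, hb, ⟨⟨rfl, h2, h3.2⟩, ?_⟩⟩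
      rw [ups_cc] at h4
      rw [if_neg (by omega)] at h4
      exact h4

lemma cons_up {L : List ℕ} {Y S : ℕ} (h : L ∈ Omega 0 (Y+1) S) :
    Y :: L ∈ Omega 0 Y (S+1) := by
  obtain ⟨⟨h1, h2, h3⟩, h4⟩ := h
  match L with
  | [] => simp at h1
  | b :: t =>
    simp at h1; subst h1
    exact ⟨⟨rfl, by rwa [List.getLast?_cons_cons],
      List.isChain_cons_cons.2 ⟨Or.inl rfl, h3⟩⟩, by rw [ups_cc, if_pos rfl]; simpa using h4⟩

lemma cons_down {L : List ℕ} {Y S : ℕ} (h : L ∈ Omega 0 Y S) :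
    (Y+1) :: L ∈ Omega 0 (Y+1) S := by
  obtain ⟨⟨h1, h2, h3⟩, h4⟩ := h
  match L with
  | [] => simp at h1
  | b :: t =>
    simp at h1; subst h1
    exact ⟨⟨rfl, by rwa [List.getLast?_cons_cons],
      List.isChain_cons_cons.2 ⟨Or.inr rfl, h3⟩⟩, by rw [ups_cc, if_neg (by omega)]; exact h4⟩

lemma omega_zero_zero : Omega 0 0 0 = {[0]} := by
  ext L
  constructor
  · intro h
    rcases omega_cases h with ⟨_, _, rfl⟩ | ⟨t, rfl, ⟨S', hS, _⟩ | ⟨Y', hY, _⟩⟩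
    · rfl
    · omega
    · omega
  · rintro rfl
    exact ⟨⟨rfl, rfl, List.isChain_singleton _⟩, rfl⟩

lemma omega_succ_zero (Y : ℕ) : Omega 0 (Y+1) 0 = (List.cons (Y+1)) '' Omega 0 Y 0 := by
  ext L
  constructor
  · intro h
    rcases omega_cases h with ⟨h0, _, _⟩ | ⟨t, rfl, ⟨S', hS, _⟩ | ⟨Y', hY, ht⟩⟩
    · omega
    · omega
    · obtain rfl : Y' = Y := by omega
      exact ⟨t, ht, rfl⟩
  · rintro ⟨t, ht, rfl⟩
    exact cons_down ht

lemma omega_zero_succ (S : ℕ) : Omega 0 0 (S+1) = (List.cons 0) '' Omega 0 1 S := by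
  ext L
  constructor
  · intro h
    rcases omega_cases h with ⟨_, h0, _⟩ | ⟨t, rfl, ⟨S', hS, ht⟩ | ⟨Y', hY, _⟩⟩
    · omega
    · obtain rfl : S' = S := by omega
      exact ⟨t, ht, rfl⟩
    · omega
  · rintro ⟨t, ht, rfl⟩
    exact cons_up ht

lemma omega_succ_succ (Y S : ℕ) : Omega 0 (Y+1) (S+1) =
    (List.cons (Y+1)) '' Omega 0 (Y+2) S ∪ (List.cons (Y+1)) '' Omega 0 Y (S+1) := by
  ext L
  constructor
  · intro h
    rcases omega_cases h with ⟨h0, _, _⟩ | ⟨t, rfl, ⟨S', hS, ht⟩ | ⟨Y', hY, ht⟩⟩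
    · omega
    · obtain rfl : S' = S := by omega
      exact Or.inl ⟨t, ht, rfl⟩
    · obtain rfl : Y' = Y := by omega
      exact Or.inr ⟨t, ht, rfl⟩
  · rintro (⟨t, ht, rfl⟩ | ⟨t, ht, rfl⟩)
    · exact cons_up ht
    · exact cons_down ht

lemma omega_finite_aux (n : ℕ) : ∀ Y S, Y + 2 * S = n → (Omega 0 Y S).Finite := by
  induction n using Nat.strong_induction_on with
  | _ n ih =>
  intro Y S hn
  match Y, S with
  | 0, 0 => rw [omega_zero_zero]; exact Set.finite_singleton _
  | Y+1, 0 => rw [omega_succ_zero]; exact (ih (Y + 2 * 0) (by omega) Y 0 rfl).image _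
  | 0, S+1 => rw [omega_zero_succ]; exact (ih (1 + 2 * S) (by omega) 1 S rfl).image _
  | Y+1, S+1 =>
    rw [omega_succ_succ]
    exact ((ih (Y+2+2*S) (by omega) (Y+2) S rfl).image _).union ((ih (Y+2*(S+1)) (by omega) Y (S+1) rfl).image _)

lemma omega_finite (Y S : ℕ) : (Omega 0 Y S).Finite := omega_finite_aux _ Y S rfl


/-- `Ξ(X,Y,S) = Σ_{Δ ∈ Ω(X,Y,S)} ∏_{j=1}^{S} e(Δ,j)`. -/
noncomputable def XiZ (X Y S : ℕ) : ℤ :=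
  ∑ᶠ L ∈ Omega X Y S, ((upsList L).prod : ℤ)


lemma cons_injOn (a : ℕ) (A : Set (List ℕ)) : Set.InjOn (List.cons a) A :=
  fun _ _ _ _ h => by simpa using h

lemma head_cons {L : List ℕ} {Y S : ℕ} (h : L ∈ Omega 0 Y S) : ∃ t, L = Y :: t := by
  obtain ⟨⟨h1, -, -⟩, -⟩ := h
  match L with
  | [] => simp at h1
  | b :: t => simp at h1; exact ⟨t, by rw [h1]⟩

lemma prod_cons_up {L : List ℕ} {Y S : ℕ} (h : L ∈ Omega 0 (Y+1) S) :
    ((upsList (Y :: L)).prod : ℤ) = (Y+1) * ((upsList L).prod : ℤ) := by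
  obtain ⟨t, rfl⟩ := head_cons h
  rw [ups_cc, if_pos rfl]
  push_cast [List.prod_cons]
  ring

lemma prod_cons_down {L : List ℕ} {Y S : ℕ} (h : L ∈ Omega 0 Y S) :
    ((upsList ((Y+1) :: L)).prod : ℤ) = ((upsList L).prod : ℤ) := by
  obtain ⟨t, rfl⟩ := head_cons h
  rw [ups_cc, if_neg (by omega)]

lemma finsum_mem_mul_const {A : Set (List ℕ)} (hA : A.Finite) (c : ℤ) (g : List ℕ → ℤ) :
    ∑ᶠ x ∈ A, c * g x = c * ∑ᶠ x ∈ A, g x := by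
  rw [← hA.coe_toFinset, finsum_mem_coe_finset, finsum_mem_coe_finset, Finset.mul_sum]

lemma xiZ_zz : XiZ 0 0 0 = 1 := by
  rw [XiZ, omega_zero_zero, finsum_mem_singleton]
  simp [upsList]

lemma xiZ_sz (Y : ℕ) : XiZ 0 (Y+1) 0 = XiZ 0 Y 0 := by
  rw [XiZ, XiZ, omega_succ_zero, finsum_mem_image (cons_injOn _ _)]
  exact finsum_mem_congr rfl fun L hL => prod_cons_down hL

lemma xiZ_zs (S : ℕ) : XiZ 0 0 (S+1) = XiZ 0 1 S := by
  rw [XiZ, XiZ, omega_zero_succ, finsum_mem_image (cons_injOn _ _)]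
  exact finsum_mem_congr rfl fun L hL => by rw [prod_cons_up hL]; push_cast; ring

lemma xiZ_ss (Y S : ℕ) : XiZ 0 (Y+1) (S+1) = (Y+2) * XiZ 0 (Y+2) S + XiZ 0 Y (S+1) := by
  have hd : Disjoint ((List.cons (Y+1)) '' Omega 0 (Y+2) S) ((List.cons (Y+1)) '' Omega 0 Y (S+1)) := by
    rw [Set.disjoint_left]
    rintro x ⟨L1, h1, rfl⟩ ⟨L2, h2, heq⟩
    obtain rfl : L2 = L1 := by simpa using heq
    obtain ⟨t1, rfl⟩ := head_cons h1
    obtain ⟨t2, ht2⟩ := head_cons h2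
    simp at ht2
  rw [XiZ, XiZ, XiZ, omega_succ_succ,
    finsum_mem_union hd ((omega_finite _ _).image _) ((omega_finite _ _).image _),
    finsum_mem_image (cons_injOn _ _), finsum_mem_image (cons_injOn _ _)]
  congr 1
  · rw [finsum_mem_congr rfl fun L hL => prod_cons_up (Y := Y+1) hL,
      finsum_mem_mul_const (omega_finite _ _)]
    have e : Y+1+1 = Y+2 := rfl
    rw [e]
    push_cast
    ring
  · exact finsum_mem_congr rfl fun L hL => prod_cons_down hL

lemma df_rec (S : ℕ) : Nat.doubleFactorial (2*(S+1)-1) = (2*S+1) * Nat.doubleFactorial (2*S-1) := by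
  cases S with
  | zero => simp [Nat.doubleFactorial]
  | succ S =>
    have e1 : 2*(S+1+1)-1 = (2*(S+1)-1) + 2 := by omega
    rw [e1, Nat.doubleFactorial]
    congr 1

lemma main_aux (n : ℕ) : ∀ Y S, Y + 2 * S = n →
    XiZ 0 Y S = (Nat.choose (Y + 2 * S) Y : ℤ) * (Nat.doubleFactorial (2 * S - 1) : ℤ) := by
  induction n using Nat.strong_induction_on with
  | _ n ih =>
  intro Y S hn
  match Y, S with
  | 0, 0 => simpa [Nat.doubleFactorial] using xiZ_zz
  | Y+1, 0 =>
    rw [xiZ_sz, ih (Y + 2 * 0) (by omega) Y 0 rfl]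
    simp [Nat.choose_self]
  | 0, S+1 =>
    rw [xiZ_zs, ih (1 + 2 * S) (by omega) 1 S rfl, df_rec]
    rw [Nat.choose_one_right, Nat.choose_zero_right]
    push_cast
    ring
  | Y+1, S+1 =>
    rw [xiZ_ss, ih (Y+2+2*S) (by omega) (Y+2) S rfl, ih (Y+2*(S+1)) (by omega) Y (S+1) rfl,
      df_rec]
    have h1 := Nat.choose_succ_right_eq (Y+2*S+2) (Y+1)
    have e2 : Y+2*S+2 - (Y+1) = 2*S+1 := by omega
    rw [e2] at h1
    have h3 : Nat.choose (Y+1+2*(S+1)) (Y+1) = Nat.choose (Y+2*S+2) Y + Nat.choose (Y+2*S+2) (Y+1) := by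
      have e3 : Y+1+2*(S+1) = (Y+2*S+2)+1 := by ring
      rw [e3, Nat.choose_succ_succ]
    have e4 : Y+2+2*S = Y+2*S+2 := by ring
    have e5 : Y+2*(S+1) = Y+2*S+2 := by ring
    rw [h3, e4, e5]
    have h1' : (Nat.choose (Y+2*S+2) (Y+2) : ℤ) * (Y+2) = (Nat.choose (Y+2*S+2) (Y+1) : ℤ) * (2*S+1) := by
      exact_mod_cast congrArg (Nat.cast : ℕ → ℤ) h1
    push_cast
    linear_combination (Nat.doubleFactorial (2*S-1) : ℤ) * h1'

theorem stmt14 (Y S : ℕ) :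
    XiZ 0 Y S = (Nat.choose (Y + 2 * S) Y : ℤ) * (Nat.doubleFactorial (2 * S - 1) : ℤ) := by
  exact main_aux _ Y S rfl
end

section
/- Let x be a word over {1,2} and S a natural number. The number of paths of length |x| + 2S in the Young–Fibonacci graph from x down to the empty word ε that use exactly S upward edges (and |x| + S downward edges), staying in the graph at all times, equals C(|x|+2S, |x|) · (2S−1)!! · ∏_{j=1}^{d(x)} g(x,j), with (−1)!! = 1. -/
def takeBefore2 : ℕ → List ℕ → List ℕ
  | _, [] => []
  | m, a :: t =>
      if a = 2 then (if m ≤ 1 then [] else a :: takeBefore2 (m - 1) t)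
      else a :: takeBefore2 m t

/-- `gval x m` is `g(x,m) = β₀ + ⋯ + β_{m-1} + 2m - 1`, computed as one plus the digit
sum of the part of `x` lying strictly to the right of the `m`-th `2` counted from the right. -/
def gval (x : List ℕ) (m : ℕ) : ℕ := 1 + (takeBefore2 m x.reverse).sum

/-- Index of the leftmost `1` in a word (equals the length if there is no `1`). -/
def firstOnePos (w : List ℕ) : ℕ := w.findIdx (fun d => d == 1)

/-- The vertices covering `y` in the Young–Fibonacci graph: insert a `1` anywhere to the
left of the leftmost `1`, or replace the leftmost `1` by a `2`. -/
def children (y : List ℕ) : Set (List ℕ) :=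
  {u | (∃ j, j ≤ firstOnePos y ∧ j ≤ y.length ∧ u = y.take j ++ 1 :: y.drop j) ∨
       (firstOnePos y < y.length ∧ u = y.set (firstOnePos y) 2)}

/-- The vertices covered by `w` in the Young–Fibonacci graph: replace one of the `2`s
preceding the first `1` by a `1`, or delete the first `1`. -/
def parents (w : List ℕ) : Set (List ℕ) :=
  {u | (∃ j, j < firstOnePos w ∧ u = w.set j 1) ∨
       (firstOnePos w < w.length ∧
         u = w.take (firstOnePos w) ++ w.drop (firstOnePos w + 1))}

/-! ### Auxiliary definitions -/

/-- Recursive form of the product `∏ gval`. -/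
def Ev : List ℕ → ℕ
  | [] => 1
  | a :: t => (if a = 2 then 1 + t.sum else 1) * Ev t

/-- Finset of children. -/
def Cf : List ℕ → Finset (List ℕ)
  | [] => {[1]}
  | a :: t => if a = 1 then {1 :: 1 :: t, 2 :: t}
              else insert (1 :: a :: t) ((Cf t).image (a :: ·))

/-- Finset of down-neighbours (elements `u` with `x ∈ children u`). -/
def Df : List ℕ → Finset (List ℕ)
  | [] => ∅
  | a :: t => if a = 1 then {t}
      else if a = 2 then insert (1 :: t) ((Df t).image (a :: ·))
      else (Df t).image (a :: ·)

def Wrd (x : List ℕ) : Prop := ∀ d ∈ x, d = 1 ∨ d = 2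

def edge (a b : List ℕ) : Prop := a ∈ children b ∨ b ∈ children a

/-- Finset of paths of length `L+1` from `x` to `[]`. -/
def paths : ℕ → List ℕ → Finset (List (List ℕ))
  | 0, x => if x = [] then {[[]]} else ∅
  | L + 1, x => (Df x ∪ Cf x).biUnion (fun y => (paths L y).image (x :: ·))

/-! ### Characterisation of children -/

lemma firstOnePos_cons (a : ℕ) (t : List ℕ) :
    firstOnePos (a :: t) = if a = 1 then 0 else firstOnePos t + 1 := by
  simp [firstOnePos, List.findIdx_cons, Bool.cond_eq_if]

lemma mem_children_nil (u : List ℕ) : u ∈ children [] ↔ u = [1] := by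
  constructor
  · rintro (⟨j, hj, -, rfl⟩ | ⟨h, -⟩)
    · have : j = 0 := by simpa [firstOnePos] using hj
      subst this; simp
    · simp [firstOnePos] at h
  · rintro rfl
    exact Or.inl ⟨0, by simp [firstOnePos]⟩

lemma mem_children_cons_one (t : List ℕ) (u : List ℕ) :
    u ∈ children (1 :: t) ↔ u = 1 :: 1 :: t ∨ u = 2 :: t := by
  have hf : firstOnePos (1 :: t) = 0 := by simp [firstOnePos_cons]
  constructor
  · rintro (⟨j, hj, -, rfl⟩ | ⟨-, rfl⟩)
    · rw [hf] at hj
      interval_cases j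
      · simp
    · rw [hf]
      simp
  · rintro (rfl | rfl)
    · exact Or.inl ⟨0, by simp [hf]⟩
    · exact Or.inr ⟨by simp [hf], by simp [hf]⟩

lemma firstOnePos_le_length (t : List ℕ) : firstOnePos t ≤ t.length :=
  List.findIdx_le_length

lemma mem_children_cons (a : ℕ) (t : List ℕ) (u : List ℕ) (ha : a ≠ 1) :
    u ∈ children (a :: t) ↔ u = 1 :: a :: t ∨ ∃ v ∈ children t, u = a :: v := by
  have hf : firstOnePos (a :: t) = firstOnePos t + 1 := by simp [firstOnePos_cons, ha]
  constructor
  · rintro (⟨j, hj1, hj2, rfl⟩ | ⟨h1, rfl⟩)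
    · rw [hf] at hj1
      match j with
      | 0 => left; simp
      | j + 1 =>
          right
          refine ⟨t.take j ++ 1 :: t.drop j, Or.inl ⟨j, ?_, ?_, rfl⟩, by simp⟩
          · omega
          · simpa using hj2
    · rw [hf] at h1 ⊢
      right
      refine ⟨t.set (firstOnePos t) 2, Or.inr ⟨by simpa using h1, rfl⟩, by simp⟩
  · rintro (rfl | ⟨v, (⟨j, hj1, hj2, rfl⟩ | ⟨h1, rfl⟩), rfl⟩)
    · exact Or.inl ⟨0, by simp [hf]⟩
    · exact Or.inl ⟨j + 1, by rw [hf]; omega, by simpa using hj2, by simp⟩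
    · exact Or.inr ⟨by rw [hf]; simpa using h1, by simp [hf]⟩

lemma mem_Cf (x u : List ℕ) : u ∈ Cf x ↔ u ∈ children x := by
  induction x generalizing u with
  | nil => simp [Cf, mem_children_nil]
  | cons a t ih =>
    by_cases ha : a = 1
    · subst ha
      simp [Cf, mem_children_cons_one]
    · rw [mem_children_cons a t u ha]
      simp only [Cf, if_neg ha, Finset.mem_insert, Finset.mem_image]
      constructor
      · rintro (rfl | ⟨v, hv, rfl⟩)
        · exact Or.inl rfl
        · exact Or.inr ⟨v, (ih v).1 hv, rfl⟩
      · rintro (rfl | ⟨v, hv, rfl⟩)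
        · exact Or.inl rfl
        · exact Or.inr ⟨v, (ih v).2 hv, rfl⟩

lemma ne_nil_of_mem_children {v u : List ℕ} (h : v ∈ children u) : v ≠ [] := by
  rcases h with ⟨j, -, -, rfl⟩ | ⟨h1, rfl⟩
  · simp
  · intro hc
    have h2 := congrArg List.length hc
    simp only [List.length_set, List.length_nil] at h2
    omega

lemma cons_one_mem_children (t u : List ℕ) : (1 : ℕ) :: t ∈ children u ↔ u = t := by
  constructor
  · intro h
    match u with
    | [] =>
      rw [mem_children_nil] at h
      simp at h
      simp [h]
    | c :: s =>
      by_cases hc : c = 1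
      · subst hc
        rw [mem_children_cons_one] at h
        rcases h with h | h <;> simp at h
        simp [h]
      · rw [mem_children_cons c s _ hc] at h
        rcases h with h | ⟨v, hv, h⟩
        · simp at h
          simp [h]
        · simp at h
          exact absurd h.1.symm hc
  · rintro rfl
    match u with
    | [] => rw [mem_children_nil]
    | c :: s =>
      by_cases hc : c = 1
      · subst hc
        rw [mem_children_cons_one]
        exact Or.inl rfl
      · rw [mem_children_cons c s _ hc]
        exact Or.inl rfl

lemma cons_mem_children (a : ℕ) (t u : List ℕ) (ha : a ≠ 1) :
    a :: t ∈ children u ↔ (a = 2 ∧ u = 1 :: t) ∨ ∃ s, u = a :: s ∧ t ∈ children s := by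
  constructor
  · intro h
    match u with
    | [] =>
      rw [mem_children_nil] at h
      simp at h
      exact absurd h.1 ha
    | c :: s =>
      by_cases hc : c = 1
      · subst hc
        rw [mem_children_cons_one] at h
        rcases h with h | h <;> simp at h
        · exact absurd h.1 ha
        · exact Or.inl ⟨h.1, by simp [h.2]⟩
      · rw [mem_children_cons c s _ hc] at h
        rcases h with h | ⟨v, hv, h⟩
        · simp at h
          exact absurd h.1 ha
        · simp at h
          exact Or.inr ⟨s, by simp [h.1.symm], h.2 ▸ hv⟩
  · rintro (⟨rfl, rfl⟩ | ⟨s, rfl, hs⟩)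
    · rw [mem_children_cons_one]
      exact Or.inr rfl
    · rw [mem_children_cons a s _ ha]
      exact Or.inr ⟨t, hs, rfl⟩

lemma Df_one (t : List ℕ) : Df (1 :: t) = {t} := by simp [Df]

lemma Df_two (t : List ℕ) : Df (2 :: t) = insert (1 :: t) ((Df t).image (2 :: ·)) := by
  simp [Df]

lemma Df_other (a : ℕ) (t : List ℕ) (h1 : a ≠ 1) (h2 : a ≠ 2) :
    Df (a :: t) = (Df t).image (a :: ·) := by simp [Df, h1, h2]

lemma mem_Df (x u : List ℕ) : u ∈ Df x ↔ x ∈ children u := by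
  induction x generalizing u with
  | nil =>
    simp only [Df, Finset.notMem_empty, false_iff]
    intro h
    exact ne_nil_of_mem_children h rfl
  | cons a t ih =>
    by_cases ha : a = 1
    · subst ha
      rw [Df_one, Finset.mem_singleton, cons_one_mem_children]
    · rw [cons_mem_children a t u ha]
      by_cases ha2 : a = 2
      · subst ha2
        rw [Df_two]
        simp only [Finset.mem_insert, Finset.mem_image]
        constructor
        · rintro (rfl | ⟨v, hv, rfl⟩)
          · exact Or.inl (by simp)
          · exact Or.inr ⟨v, rfl, (ih v).1 hv⟩
        · rintro (⟨-, rfl⟩ | ⟨s, rfl, hs⟩)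
          · exact Or.inl rfl
          · exact Or.inr ⟨s, (ih s).2 hs, rfl⟩
      · rw [Df_other a t ha ha2]
        simp only [Finset.mem_image]
        constructor
        · rintro ⟨v, hv, rfl⟩
          exact Or.inr ⟨v, rfl, (ih v).1 hv⟩
        · rintro (⟨h2, -⟩ | ⟨s, rfl, hs⟩)
          · exact absurd h2 ha2
          · exact ⟨s, (ih s).2 hs, rfl⟩

/-! ### Sums and words -/

lemma wrd_cons_iff {a : ℕ} {t : List ℕ} : Wrd (a :: t) ↔ (a = 1 ∨ a = 2) ∧ Wrd t := by
  simp [Wrd, List.forall_mem_cons]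

lemma sum_of_mem_Cf {x u : List ℕ} (h : u ∈ Cf x) : u.sum = x.sum + 1 := by
  induction x generalizing u with
  | nil =>
    simp [Cf] at h
    subst h
    simp
  | cons a t ih =>
    by_cases ha : a = 1
    · subst ha
      simp [Cf] at h
      rcases h with rfl | rfl <;> simp <;> omega
    · simp [Cf, ha] at h
      rcases h with rfl | ⟨v, hv, rfl⟩
      · simp; omega
      · have := ih hv
        simp only [List.sum_cons] at this ⊢
        omega

lemma sum_of_mem_Df {x u : List ℕ} (h : u ∈ Df x) : u.sum + 1 = x.sum := by
  induction x generalizing u with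
  | nil => simp [Df] at h
  | cons a t ih =>
    by_cases ha : a = 1
    · subst ha
      rw [Df_one] at h
      simp at h
      subst h
      simp
      omega
    · by_cases ha2 : a = 2
      · subst ha2
        rw [Df_two] at h
        simp at h
        rcases h with rfl | ⟨v, hv, rfl⟩
        · simp; omega
        · have := ih hv
          simp only [List.sum_cons] at this ⊢
          omega
      · rw [Df_other a t ha ha2] at h
        simp at h
        rcases h with ⟨v, hv, rfl⟩
        have := ih hv
        simp only [List.sum_cons] at this ⊢
        omega

lemma wrd_of_mem_Cf {x u : List ℕ} (hx : Wrd x) (h : u ∈ Cf x) : Wrd u := by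
  induction x generalizing u with
  | nil =>
    simp [Cf] at h
    subst h
    simp [Wrd]
  | cons a t ih =>
    rw [wrd_cons_iff] at hx
    by_cases ha : a = 1
    · subst ha
      simp [Cf] at h
      rcases h with rfl | rfl
      · exact wrd_cons_iff.2 ⟨Or.inl rfl, wrd_cons_iff.2 ⟨Or.inl rfl, hx.2⟩⟩
      · exact wrd_cons_iff.2 ⟨Or.inr rfl, hx.2⟩
    · simp [Cf, ha] at h
      rcases h with rfl | ⟨v, hv, rfl⟩
      · exact wrd_cons_iff.2 ⟨Or.inl rfl, wrd_cons_iff.2 ⟨hx.1, hx.2⟩⟩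
      · exact wrd_cons_iff.2 ⟨hx.1, ih hx.2 hv⟩

lemma wrd_of_mem_Df {x u : List ℕ} (hx : Wrd x) (h : u ∈ Df x) : Wrd u := by
  induction x generalizing u with
  | nil => simp [Df] at h
  | cons a t ih =>
    rw [wrd_cons_iff] at hx
    by_cases ha : a = 1
    · subst ha
      rw [Df_one] at h
      simp at h
      subst h
      exact hx.2
    · by_cases ha2 : a = 2
      · subst ha2
        rw [Df_two] at h
        simp at h
        rcases h with rfl | ⟨v, hv, rfl⟩
        · exact wrd_cons_iff.2 ⟨Or.inl rfl, hx.2⟩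
        · exact wrd_cons_iff.2 ⟨Or.inr rfl, ih hx.2 hv⟩
      · rcases hx.1 with h1 | h2
        · exact absurd h1 ha
        · exact absurd h2 ha2

/-! ### `Ev` equals the product of `gval`s -/

lemma tb_two {m : ℕ} (t : List ℕ) (hm : ¬ m ≤ 1) :
    takeBefore2 m (2 :: t) = 2 :: takeBefore2 (m - 1) t := by
  simp [takeBefore2, hm]

lemma tb_two' {m : ℕ} (t : List ℕ) (hm : m ≤ 1) : takeBefore2 m (2 :: t) = [] := by
  simp [takeBefore2, hm]

lemma tb_ne {a m : ℕ} (t : List ℕ) (ha : a ≠ 2) :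
    takeBefore2 m (a :: t) = a :: takeBefore2 m t := by
  simp [takeBefore2, ha]

lemma Ev_one (t : List ℕ) : Ev (1 :: t) = Ev t := by simp [Ev]

lemma Ev_two (t : List ℕ) : Ev (2 :: t) = (1 + t.sum) * Ev t := by simp [Ev]

lemma tb_append {m : ℕ} {l : List ℕ} (r : List ℕ) (h1 : 1 ≤ m) (h2 : m ≤ l.count 2) :
    takeBefore2 m (l ++ r) = takeBefore2 m l := by
  induction l generalizing m with
  | nil => simp at h2; omega
  | cons a t ih =>
    rw [List.cons_append]
    by_cases ha : a = 2
    · subst ha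
      by_cases hm : m ≤ 1
      · rw [tb_two' _ hm, tb_two' _ hm]
      · rw [tb_two _ hm, tb_two _ hm,
          ih (by omega) (by simp [List.count_cons] at h2; omega)]
    · rw [tb_ne _ ha, tb_ne _ ha, ih h1 (by simpa [List.count_cons, ha] using h2)]

lemma tb_full {l : List ℕ} (r : List ℕ) :
    takeBefore2 (l.count 2 + 1) (l ++ 2 :: r) = l := by
  induction l with
  | nil => simp [takeBefore2]
  | cons a t ih =>
    rw [List.cons_append]
    by_cases ha : a = 2
    · subst ha
      have hc : (2 :: t).count 2 = t.count 2 + 1 := by simp [List.count_cons]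
      rw [hc, tb_two _ (by omega), Nat.add_sub_cancel, ih]
    · have hc : (a :: t).count 2 = t.count 2 := by simp [List.count_cons, ha]
      rw [hc, tb_ne _ ha, ih]

lemma gval_cons {a : ℕ} {t : List ℕ} {j : ℕ} (h1 : 1 ≤ j) (h2 : j ≤ t.count 2) :
    gval (a :: t) j = gval t j := by
  unfold gval
  rw [List.reverse_cons, tb_append [a] h1 (by rwa [List.count_reverse])]

lemma gval_two_top (t : List ℕ) : gval (2 :: t) (t.count 2 + 1) = 1 + t.sum := by
  unfold gval
  rw [List.reverse_cons]
  have h := tb_full (l := t.reverse) []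
  rw [List.count_reverse] at h
  rw [show ([2] : List ℕ) = 2 :: [] from rfl, h, List.sum_reverse]

lemma Ev_eq_prod (x : List ℕ) (hx : Wrd x) :
    Ev x = ∏ j ∈ Finset.Icc 1 (x.count 2), gval x j := by
  induction x with
  | nil => simp [Ev]
  | cons a t ih =>
    have hwt : Wrd t := (wrd_cons_iff.1 hx).2
    have hprod : ∏ j ∈ Finset.Icc 1 (t.count 2), gval (a :: t) j
        = ∏ j ∈ Finset.Icc 1 (t.count 2), gval t j := by
      refine Finset.prod_congr rfl fun j hj => ?_
      rw [Finset.mem_Icc] at hj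
      exact gval_cons hj.1 hj.2
    by_cases ha : a = 2
    · subst ha
      have hc : (2 :: t).count 2 = t.count 2 + 1 := by simp [List.count_cons]
      rw [hc, Finset.prod_Icc_succ_top (by omega : 1 ≤ t.count 2 + 1), hprod, ← ih hwt,
        gval_two_top, Ev_two]
      ring
    · have hc : (a :: t).count 2 = t.count 2 := by simp [List.count_cons, ha]
      rw [hc, hprod, ← ih hwt]
      simp [Ev, ha]

/-! ### The two sum identities -/

lemma not_mem_image_cons {b c : ℕ} {t : List ℕ} {s : Finset (List ℕ)} (h : b ≠ c) :
    b :: t ∉ s.image (c :: ·) := by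
  simp only [Finset.mem_image, not_exists, not_and]
  intro v _ hv
  injection hv with h1 _
  exact h h1.symm

lemma sum_image_cons (s : Finset (List ℕ)) (c : ℕ) (f : List ℕ → ℕ) :
    ∑ y ∈ s.image (c :: ·), f y = ∑ v ∈ s, f (c :: v) :=
  Finset.sum_image (fun _ _ _ _ h => by injection h)

lemma sum_Df_Ev (x : List ℕ) (hx : Wrd x) (hne : x ≠ []) :
    ∑ y ∈ Df x, Ev y = Ev x := by
  induction x with
  | nil => exact absurd rfl hne
  | cons a t ih =>
    have hwt : Wrd t := (wrd_cons_iff.1 hx).2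
    rcases (wrd_cons_iff.1 hx).1 with ha | ha <;> subst ha
    · rw [Df_one]
      simp [Ev_one]
    · rw [Df_two, Finset.sum_insert (not_mem_image_cons (by omega)), sum_image_cons]
      have hs : ∑ v ∈ Df t, Ev (2 :: v) = ∑ v ∈ Df t, t.sum * Ev v := by
        refine Finset.sum_congr rfl fun v hv => ?_
        have h2 := sum_of_mem_Df hv
        rw [Ev_two, show 1 + v.sum = t.sum by omega]
      rcases eq_or_ne t [] with rfl | hne2
      · simp [Df, Ev_one, Ev_two, Ev]
      · rw [hs, ← Finset.mul_sum, ih hwt hne2, Ev_one, Ev_two]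
        ring

lemma Cf_one (t : List ℕ) : Cf (1 :: t) = {1 :: 1 :: t, 2 :: t} := by simp [Cf]

lemma Cf_cons (a : ℕ) (t : List ℕ) (ha : a ≠ 1) :
    Cf (a :: t) = insert (1 :: a :: t) ((Cf t).image (a :: ·)) := by simp [Cf, ha]

lemma sum_Cf_Ev (x : List ℕ) (hx : Wrd x) :
    ∑ y ∈ Cf x, Ev y = (x.sum + 1) * Ev x := by
  induction x with
  | nil => simp [Cf, Ev]
  | cons a t ih =>
    have hwt : Wrd t := (wrd_cons_iff.1 hx).2
    rcases (wrd_cons_iff.1 hx).1 with ha | ha <;> subst ha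
    · rw [Cf_one, Finset.sum_pair (by simp), Ev_one, Ev_one, Ev_two]
      simp only [List.sum_cons]
      ring
    · rw [Cf_cons 2 t (by omega), Finset.sum_insert (not_mem_image_cons (by omega)),
        sum_image_cons]
      have hs : ∑ v ∈ Cf t, Ev (2 :: v) = ∑ v ∈ Cf t, (t.sum + 2) * Ev v := by
        refine Finset.sum_congr rfl fun v hv => ?_
        have h2 := sum_of_mem_Cf hv
        rw [Ev_two, show 1 + v.sum = t.sum + 2 by omega]
      rw [hs, ← Finset.mul_sum, ih hwt, Ev_one, Ev_two]
      simp only [List.sum_cons]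
      ring

/-! ### Paths -/

lemma head?_of_mem_paths {L : ℕ} {x : List ℕ} {P : List (List ℕ)}
    (h : P ∈ paths L x) : P.head? = some x := by
  cases L with
  | zero =>
    by_cases hx : x = []
    · subst hx
      simp [paths] at h
      subst h
      rfl
    · simp [paths, hx] at h
  | succ L =>
    simp only [paths, Finset.mem_biUnion, Finset.mem_image] at h
    obtain ⟨y, -, Q, -, rfl⟩ := h
    rfl

lemma mem_paths (L : ℕ) (x : List ℕ) (hx : Wrd x) (P : List (List ℕ)) :
    P ∈ paths L x ↔
      P.head? = some x ∧ P.getLast? = some ([] : List ℕ) ∧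
      P.length = L + 1 ∧ P.Chain' edge := by
  induction L generalizing x P with
  | zero =>
    constructor
    · intro h
      by_cases hx0 : x = []
      · subst hx0
        simp [paths] at h
        subst h
        exact ⟨rfl, rfl, rfl, List.isChain_singleton _⟩
      · simp [paths, hx0] at h
    · rintro ⟨h1, h2, h3, -⟩
      obtain ⟨b, rfl⟩ := List.length_eq_one_iff.1 (by simpa using h3)
      simp only [List.head?_cons, Option.some.injEq] at h1
      simp only [List.getLast?_singleton, Option.some.injEq] at h2
      subst h1
      subst h2
      simp [paths]
  | succ L ih =>
    constructor
    · intro h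
      simp only [paths, Finset.mem_biUnion, Finset.mem_image] at h
      obtain ⟨y, hy, Q, hQ, rfl⟩ := h
      have hwy : Wrd y := by
        rcases Finset.mem_union.1 hy with h' | h'
        · exact wrd_of_mem_Df hx h'
        · exact wrd_of_mem_Cf hx h'
      obtain ⟨h1, h2, h3, h4⟩ := (ih y hwy Q).1 hQ
      obtain ⟨z, Q', rfl⟩ : ∃ z Q', Q = z :: Q' := by
        cases Q with
        | nil => simp at h1
        | cons z Q' => exact ⟨z, Q', rfl⟩
      have hz : z = y := by simpa using h1
      subst hz
      refine ⟨rfl, by rwa [List.getLast?_cons_cons], by simpa using h3, ?_⟩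
      apply List.isChain_cons_cons.2
      refine ⟨?_, h4⟩
      rcases Finset.mem_union.1 hy with h' | h'
      · exact Or.inl ((mem_Df x z).1 h')
      · exact Or.inr ((mem_Cf x z).1 h')
    · rintro ⟨h1, h2, h3, h4⟩
      obtain ⟨x', P', rfl⟩ : ∃ x' P', P = x' :: P' := by
        cases P with
        | nil => simp at h1
        | cons a b => exact ⟨a, b, rfl⟩
      obtain rfl : x = x' := by simpa using h1.symm
      obtain ⟨y, Q', rfl⟩ : ∃ y Q', P' = y :: Q' := by
        cases P' with
        | nil => simp at h3
        | cons a b => exact ⟨a, b, rfl⟩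
      obtain ⟨he, hc⟩ := List.isChain_cons_cons.1 h4
      have hy : y ∈ Df x ∪ Cf x := by
        rcases he with h' | h'
        · exact Finset.mem_union_left _ ((mem_Df x y).2 h')
        · exact Finset.mem_union_right _ ((mem_Cf x y).2 h')
      have hwy : Wrd y := by
        rcases Finset.mem_union.1 hy with h' | h'
        · exact wrd_of_mem_Df hx h'
        · exact wrd_of_mem_Cf hx h'
      simp only [paths, Finset.mem_biUnion, Finset.mem_image]
      refine ⟨y, hy, y :: Q', (ih y hwy _).2 ⟨rfl, ?_, ?_, hc⟩, rfl⟩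
      · rwa [List.getLast?_cons_cons] at h2
      · simpa using h3

lemma card_paths_succ (L : ℕ) (x : List ℕ) :
    (paths (L + 1) x).card = ∑ y ∈ Df x ∪ Cf x, (paths L y).card := by
  show ((Df x ∪ Cf x).biUnion (fun y => (paths L y).image (x :: ·))).card = _
  rw [Finset.card_biUnion]
  · exact Finset.sum_congr rfl fun y _ =>
      Finset.card_image_of_injective _ (fun a b h => by injection h)
  · intro y1 _ y2 _ hne
    simp only [Function.onFun]
    rw [Finset.disjoint_left]
    intro P hP1 hP2
    simp only [Finset.mem_image] at hP1 hP2
    obtain ⟨Q1, hQ1, rfl⟩ := hP1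
    obtain ⟨Q2, hQ2, hQ⟩ := hP2
    have h1 := head?_of_mem_paths hQ1
    have h2 := head?_of_mem_paths hQ2
    have : Q2 = Q1 := by injection hQ
    subst this
    rw [h1] at h2
    exact hne (by injection h2)

lemma paths_eq_empty {L : ℕ} {x : List ℕ} (h : L < x.sum) : paths L x = ∅ := by
  induction L generalizing x with
  | zero =>
    have hx : x ≠ [] := by
      intro h0
      subst h0
      simp at h
    simp [paths, hx]
  | succ L ih =>
    apply Finset.eq_empty_of_forall_notMem
    intro P hP
    simp only [paths, Finset.mem_biUnion, Finset.mem_image] at hP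
    obtain ⟨y, hy, Q, hQ, -⟩ := hP
    have hlt : L < y.sum := by
      rcases Finset.mem_union.1 hy with h' | h'
      · have := sum_of_mem_Df h'
        omega
      · have := sum_of_mem_Cf h'
        omega
    rw [ih hlt] at hQ
    simp at hQ

lemma upcount (P : List (List ℕ)) (x : List ℕ) (hx : Wrd x)
    (hc : P.Chain' edge) (hh : P.head? = some x) (hl : P.getLast? = some ([] : List ℕ)) :
    P.length = 2 * ((P.zip P.tail).filter (fun p => p.2.sum == p.1.sum + 1)).length
      + x.sum + 1 := by
  induction P generalizing x with
  | nil => simp at hh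
  | cons a Q ih =>
    have hax : a = x := by simpa using hh
    subst hax
    cases Q with
    | nil =>
      have hx0 : a = [] := by simpa using hl
      subst hx0
      simp
    | cons y R =>
      obtain ⟨he, hc'⟩ := List.isChain_cons_cons.1 hc
      have hl' : (y :: R).getLast? = some ([] : List ℕ) := by
        rwa [List.getLast?_cons_cons] at hl
      have hzip : ((a :: y :: R).zip (a :: y :: R).tail)
          = (a, y) :: ((y :: R).zip (y :: R).tail) := rfl
      rcases he with hd | hu
      · -- down step : a ∈ children y
        have hwy : Wrd y := wrd_of_mem_Df hx ((mem_Df a y).2 hd)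
        have hs : a.sum = y.sum + 1 := sum_of_mem_Cf ((mem_Cf y a).2 hd)
        have hih := ih y hwy hc' rfl hl'
        have hb : (y.sum == a.sum + 1) = false := by
          simp only [beq_eq_false_iff_ne, ne_eq]
          omega
        rw [hzip, List.filter_cons]
        simp only [hb, Bool.false_eq_true, if_false]
        simp only [List.length_cons] at hih ⊢
        omega
      · -- up step : y ∈ children a
        have hwy : Wrd y := wrd_of_mem_Cf hx ((mem_Cf a y).2 hu)
        have hs : y.sum = a.sum + 1 := sum_of_mem_Cf ((mem_Cf a y).2 hu)
        have hih := ih y hwy hc' rfl hl'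
        have hb : (y.sum == a.sum + 1) = true := by simp [hs]
        rw [hzip, List.filter_cons]
        simp only [hb, if_true]
        simp only [List.length_cons] at hih ⊢
        omega

/-! ### Arithmetic helpers -/

lemma wrd_sum_zero {x : List ℕ} (hx : Wrd x) (h : x.sum = 0) : x = [] := by
  cases x with
  | nil => rfl
  | cons a t =>
    rcases (wrd_cons_iff.1 hx).1 with rfl | rfl <;> simp [List.sum_cons] at h

lemma wrd_sum_pos {x : List ℕ} (hx : Wrd x) (h : x ≠ []) : 1 ≤ x.sum := by
  rcases Nat.eq_zero_or_pos x.sum with h0 | h0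
  · exact absurd (wrd_sum_zero hx h0) h
  · exact h0

lemma dfac_odd (S' : ℕ) :
    Nat.doubleFactorial (2 * S' + 1) = (2 * S' + 1) * Nat.doubleFactorial (2 * S' - 1) := by
  cases S' with
  | zero => simp [Nat.doubleFactorial]
  | succ k =>
    rw [show 2 * (k + 1) + 1 = (2 * k + 1) + 2 by ring, Nat.doubleFactorial_add_two,
      show 2 * (k + 1) - 1 = 2 * k + 1 by omega]

lemma arith (m S' E : ℕ) :
    Nat.choose (m + 2 * S' + 2) m * Nat.doubleFactorial (2 * S' + 1) * E
      + Nat.choose (m + 2 * S' + 2) (m + 2) * Nat.doubleFactorial (2 * S' - 1) * ((m + 2) * E)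
    = Nat.choose (m + 2 * S' + 3) (m + 1) * Nat.doubleFactorial (2 * S' + 1) * E := by
  have h1 := Nat.choose_succ_right_eq (m + 2 * S' + 2) (m + 1)
  rw [show m + 2 * S' + 2 - (m + 1) = 2 * S' + 1 by omega] at h1
  have h3 : Nat.choose (m + 2 * S' + 3) (m + 1)
      = Nat.choose (m + 2 * S' + 2) m + Nat.choose (m + 2 * S' + 2) (m + 1) := by
    rw [show m + 2 * S' + 3 = (m + 2 * S' + 2) + 1 by omega]
    exact Nat.choose_succ_succ _ _
  have h4 : Nat.choose (m + 2 * S' + 2) (m + 2) * Nat.doubleFactorial (2 * S' - 1) * ((m + 2) * E)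
      = Nat.choose (m + 2 * S' + 2) (m + 1) * Nat.doubleFactorial (2 * S' + 1) * E := by
    calc Nat.choose (m + 2 * S' + 2) (m + 2) * Nat.doubleFactorial (2 * S' - 1) * ((m + 2) * E)
        = (Nat.choose (m + 2 * S' + 2) (m + 2) * (m + 2))
            * (Nat.doubleFactorial (2 * S' - 1) * E) := by ring
      _ = (Nat.choose (m + 2 * S' + 2) (m + 1) * (2 * S' + 1))
            * (Nat.doubleFactorial (2 * S' - 1) * E) := by rw [h1]
      _ = Nat.choose (m + 2 * S' + 2) (m + 1) * Nat.doubleFactorial (2 * S' + 1) * E := by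
            rw [dfac_odd]; ring
  rw [h4, h3]
  ring

/-! ### Main counting lemma -/

lemma card_paths (L : ℕ) : ∀ (x : List ℕ), Wrd x → ∀ S : ℕ, x.sum + 2 * S = L →
    (paths L x).card =
      Nat.choose (x.sum + 2 * S) x.sum * Nat.doubleFactorial (2 * S - 1) * Ev x := by
  induction L using Nat.strong_induction_on with
  | _ L ih =>
    intro x hx S hS
    cases L with
    | zero =>
      have hs0 : x.sum = 0 := by omega
      have hS0 : S = 0 := by omega
      subst hS0
      have hxe := wrd_sum_zero hx hs0
      subst hxe
      simp [paths, Ev, Nat.doubleFactorial]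
    | succ L =>
      have hdisj : Disjoint (Df x) (Cf x) := by
        rw [Finset.disjoint_left]
        intro y h1 h2
        have := sum_of_mem_Df h1
        have := sum_of_mem_Cf h2
        omega
      rw [card_paths_succ, Finset.sum_union hdisj]
      cases S with
      | zero =>
        have hxs : x.sum = L + 1 := by omega
        have hxne : x ≠ [] := by
          intro h0
          subst h0
          simp at hxs
        have hCf : ∑ y ∈ Cf x, (paths L y).card = 0 := by
          refine Finset.sum_eq_zero fun y hy => ?_
          have hsy := sum_of_mem_Cf hy
          rw [paths_eq_empty (by omega)]
          simp
        have hDf : ∑ y ∈ Df x, (paths L y).card = ∑ y ∈ Df x, Ev y := by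
          refine Finset.sum_congr rfl fun y hy => ?_
          have hsy := sum_of_mem_Df hy
          have hwy := wrd_of_mem_Df hx hy
          rw [ih L (by omega) y hwy 0 (by omega)]
          simp [Nat.choose_self, Nat.doubleFactorial]
        rw [hCf, hDf, sum_Df_Ev x hx hxne]
        simp [Nat.choose_self, Nat.doubleFactorial]
      | succ S' =>
        have hCf : ∑ y ∈ Cf x, (paths L y).card
            = Nat.choose (x.sum + 1 + 2 * S') (x.sum + 1) * Nat.doubleFactorial (2 * S' - 1)
              * ((x.sum + 1) * Ev x) := by
          have h0 : ∑ y ∈ Cf x, (paths L y).card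
              = ∑ y ∈ Cf x, Nat.choose (x.sum + 1 + 2 * S') (x.sum + 1)
                  * Nat.doubleFactorial (2 * S' - 1) * Ev y := by
            refine Finset.sum_congr rfl fun y hy => ?_
            have hsy := sum_of_mem_Cf hy
            have hwy := wrd_of_mem_Cf hx hy
            rw [ih L (by omega) y hwy S' (by omega), hsy]
          rw [h0, ← Finset.mul_sum, sum_Cf_Ev x hx]
        rcases eq_or_ne x [] with rfl | hxne
        · have hDf : ∑ y ∈ Df ([] : List ℕ), (paths L y).card = 0 := by
            simp [Df]
          rw [hCf, hDf]
          simp only [List.sum_nil, Ev, Nat.zero_add, zero_add, mul_one,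
            Nat.choose_one_right, Nat.choose_zero_right, one_mul]
          rw [show 2 * (S' + 1) - 1 = 2 * S' + 1 by omega, dfac_odd,
            show 0 + 1 + 2 * S' = 2 * S' + 1 by omega]
        · obtain ⟨m, hm⟩ : ∃ m, x.sum = m + 1 :=
            ⟨x.sum - 1, by have := wrd_sum_pos hx hxne; omega⟩
          have hDf : ∑ y ∈ Df x, (paths L y).card
              = Nat.choose (m + 2 * S' + 2) m * Nat.doubleFactorial (2 * S' + 1) * Ev x := by
            have h0 : ∑ y ∈ Df x, (paths L y).card
                = ∑ y ∈ Df x, Nat.choose (m + 2 * S' + 2) m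
                    * Nat.doubleFactorial (2 * S' + 1) * Ev y := by
              refine Finset.sum_congr rfl fun y hy => ?_
              have hsy := sum_of_mem_Df hy
              have hwy := wrd_of_mem_Df hx hy
              have hym : y.sum = m := by omega
              rw [ih L (by omega) y hwy (S' + 1) (by omega), hym,
                show 2 * (S' + 1) - 1 = 2 * S' + 1 by omega,
                show m + 2 * (S' + 1) = m + 2 * S' + 2 by omega]
            rw [h0, ← Finset.mul_sum, sum_Df_Ev x hx hxne]
          rw [hCf, hDf, hm,
            show m + 1 + 1 + 2 * S' = m + 2 * S' + 2 by omega,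
            show m + 1 + 1 = m + 2 by omega,
            show m + 1 + 2 * (S' + 1) = m + 2 * S' + 3 by omega,
            show 2 * (S' + 1) - 1 = 2 * S' + 1 by omega]
          exact arith m S' (Ev x)

theorem stmt19 (x : List ℕ) (hx : ∀ d ∈ x, d = 1 ∨ d = 2) (S : ℕ) :
    Nat.card {P : List (List ℕ) //
        P.head? = some x ∧ P.getLast? = some ([] : List ℕ) ∧
        P.length = x.sum + 2 * S + 1 ∧
        P.Chain' (fun a b => a ∈ children b ∨ b ∈ children a) ∧
        ((P.zip P.tail).filter (fun p => p.2.sum == p.1.sum + 1)).length = S} =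
      Nat.choose (x.sum + 2 * S) x.sum * Nat.doubleFactorial (2 * S - 1) *
        ∏ j ∈ Finset.Icc 1 (x.count 2), gval x j := by
  have hx' : Wrd x := hx
  have key : ∀ P : List (List ℕ),
      (P.head? = some x ∧ P.getLast? = some ([] : List ℕ) ∧
        P.length = x.sum + 2 * S + 1 ∧
        P.Chain' (fun a b => a ∈ children b ∨ b ∈ children a) ∧
        ((P.zip P.tail).filter (fun p => p.2.sum == p.1.sum + 1)).length = S)
      ↔ P ∈ paths (x.sum + 2 * S) x := by
    intro P
    constructor
    · rintro ⟨h1, h2, h3, h4, -⟩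
      exact (mem_paths _ x hx' P).2 ⟨h1, h2, h3, h4⟩
    · intro h
      obtain ⟨h1, h2, h3, h4⟩ := (mem_paths _ x hx' P).1 h
      refine ⟨h1, h2, h3, h4, ?_⟩
      have := upcount P x hx' h4 h1 h2
      omega
  rw [Nat.card_congr (Equiv.subtypeEquivRight key), Nat.card_eq_finsetCard,
    card_paths (x.sum + 2 * S) x hx' S rfl, Ev_eq_prod x hx']
end
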